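/- For the Dicke MPS tensor (A_0 = 1_D, A_1 = shift) and n ≥ D−1, the physical MPS subspace equals the span of the Dicke states: S_n(A) = Span{ |W_n^0⟩, |W_n^1⟩, …, |W_n^{D−1}⟩ }, where |W_n^p⟩ is the sum of all n-qubit computational basis states with exactly p ones (and |W_n^0⟩ = |0⟩^{⊗n}). -/
import Mathlib


open scoped BigOperators

noncomputable section

def prodA {d D : ℕ} (A : Fin d → Matrix (Fin D) (Fin D) ℂ) {k : ℕ} (s : Fin k → Fin d) :
    Matrix (Fin D) (Fin D) ℂ :=
  (List.ofFn fun t => A (s t)).prod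

def mpsVec {d D : ℕ} (A : Fin d → Matrix (Fin D) (Fin D) ℂ) (X : Matrix (Fin D) (Fin D) ℂ)
    (k : ℕ) : (Fin k → Fin d) → ℂ :=
  fun s => (X * prodA A s).trace

/-- The physical MPS subspace S_k(A). -/
def mpsSpace {d D : ℕ} (A : Fin d → Matrix (Fin D) (Fin D) ℂ) (k : ℕ) :
    Submodule ℂ ((Fin k → Fin d) → ℂ) :=
  Submodule.span ℂ (Set.range fun X => mpsVec A X k)

/-- The computational basis state |s⟩, as a coefficient vector. -/
def basisState {d k : ℕ} (s : Fin k → Fin d) : (Fin k → Fin d) → ℂ :=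
  fun t => if t = s then 1 else 0

/-- The nilpotent shift matrix ∑_{i=0}^{D-2} |i⟩⟨i+1|. -/
def shiftMat (D : ℕ) : Matrix (Fin D) (Fin D) ℂ :=
  Matrix.of fun i j => if (i : ℕ) + 1 = (j : ℕ) then 1 else 0

/-- The Dicke state |W_n^p⟩: the sum of all n-qubit basis states with exactly p ones. -/
def dickeState (n p : ℕ) : (Fin n → Fin 2) → ℂ :=
  ∑ s ∈ Finset.univ.filter
      (fun s : Fin n → Fin 2 => (Finset.univ.filter fun t => s t = 1).card = p),
    basisState s

lemma shiftMat_pow_apply (D q : ℕ) (i j : Fin D) :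
    ((shiftMat D) ^ q) i j = if (i : ℕ) + q = (j : ℕ) then 1 else 0 := by
  induction q generalizing i j with
  | zero =>
      simp [Matrix.one_apply, Fin.ext_iff]
  | succ q ih =>
      rw [pow_succ, Matrix.mul_apply]
      simp only [ih]
      simp only [shiftMat, Matrix.of_apply]
      by_cases h : (i : ℕ) + q + 1 = (j : ℕ)
      · have hq : (i : ℕ) + q < D := by have := j.isLt; omega
        rw [Finset.sum_eq_single (⟨(i : ℕ) + q, hq⟩ : Fin D)]
        · simp [h, show (i:ℕ) + (q+1) = (j:ℕ) by omega]
        · intro b _ hb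
          have hb' : ¬ ((i : ℕ) + q = (b : ℕ)) := by
            intro hc
            exact hb (Fin.ext hc.symm)
          simp [hb']
        · simp
      · rw [if_neg (show ¬((i:ℕ) + (q+1) = (j:ℕ)) by omega)]
        apply Finset.sum_eq_zero
        intro k _
        by_cases hk : (i : ℕ) + q = (k : ℕ)
        · have : ¬ ((k : ℕ) + 1 = (j : ℕ)) := by omega
          simp [hk, this]
        · simp [hk]

lemma shiftMat_pow_eq_zero {D q : ℕ} (h : D ≤ q) : (shiftMat D) ^ q = 0 := by
  ext i j
  rw [shiftMat_pow_apply]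
  have : ¬ ((i : ℕ) + q = (j : ℕ)) := by have := j.isLt; omega
  simp [this]

lemma card_ones_eq_sum {k : ℕ} (s : Fin k → Fin 2) :
    (Finset.univ.filter fun t => s t = 1).card = ∑ t, (if s t = 1 then 1 else 0) := by
  rw [Finset.card_filter]

lemma prodA_eq (D : ℕ) (A : Fin 2 → Matrix (Fin D) (Fin D) ℂ)
    (hA0 : A 0 = 1) (hA1 : A 1 = shiftMat D) :
    ∀ (k : ℕ) (s : Fin k → Fin 2),
      prodA A s = (shiftMat D) ^ ((Finset.univ.filter fun t => s t = 1).card) := by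
  intro k
  induction k with
  | zero =>
      intro s
      simp [prodA]
  | succ k ih =>
      intro s
      have h1 : prodA A s = A (s 0) * prodA A (fun t : Fin k => s t.succ) := by
        simp [prodA, List.ofFn_succ]
      have h2 : (Finset.univ.filter fun t => s t = 1).card
          = (if s 0 = 1 then 1 else 0)
            + (Finset.univ.filter fun t : Fin k => s t.succ = 1).card := by
        rw [card_ones_eq_sum, card_ones_eq_sum, Fin.sum_univ_succ]
      rw [h1, ih, h2]
      rcases Fin.exists_fin_two.mp ⟨s 0, rfl⟩ with h | h
      · rw [h, hA0, if_neg (by simp), one_mul, zero_add]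
      · rw [h, hA1, if_pos rfl, pow_add, pow_one]

lemma dickeState_apply (n p : ℕ) (s : Fin n → Fin 2) :
    dickeState n p s
      = if (Finset.univ.filter fun t => s t = 1).card = p then 1 else 0 := by
  classical
  rw [dickeState, Finset.sum_apply]
  simp only [basisState]
  rw [Finset.sum_ite_eq (Finset.univ.filter
      (fun s : Fin n → Fin 2 => (Finset.univ.filter fun t => s t = 1).card = p)) s
      (fun _ => (1 : ℂ))]
  simp

lemma trace_single_mul {D : ℕ} (p q0 : Fin D) (M : Matrix (Fin D) (Fin D) ℂ) :
    ((Matrix.of fun i j => if i = p ∧ j = q0 then (1 : ℂ) else 0) * M).trace = M q0 p := by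
  classical
  rw [Matrix.trace]
  simp only [Matrix.diag_apply, Matrix.mul_apply, Matrix.of_apply]
  rw [Finset.sum_eq_single p]
  · rw [Finset.sum_eq_single q0]
    · simp
    · intro b _ hb
      simp [hb]
    · simp
  · intro i _ hi
    apply Finset.sum_eq_zero
    intro j _
    simp [hi]
  · simp

/-- for the Dicke MPS tensor and n ≥ D−1,
S_n(A) = Span{|W_n^0⟩, …, |W_n^{D−1}⟩}. -/
theorem dicke_mpsSpace (D : ℕ) (A : Fin 2 → Matrix (Fin D) (Fin D) ℂ)
    (hA0 : A 0 = 1) (hA1 : A 1 = shiftMat D) :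
    ∀ n, D - 1 ≤ n →
      mpsSpace A n = Submodule.span ℂ {v | ∃ p : Fin D, v = dickeState n p} := by
  intro n _
  apply le_antisymm
  · rw [mpsSpace, Submodule.span_le]
    rintro v ⟨X, rfl⟩
    have key : mpsVec A X n
        = ∑ p : Fin D, ((X * (shiftMat D) ^ (p : ℕ)).trace) • dickeState n p := by
      funext s
      simp only [Finset.sum_apply, Pi.smul_apply, smul_eq_mul, mpsVec,
        prodA_eq D A hA0 hA1 n s, dickeState_apply]
      set c := (Finset.univ.filter fun t => s t = 1).card with hc
      by_cases hcD : c < D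
      · rw [Finset.sum_eq_single (⟨c, hcD⟩ : Fin D)]
        · simp
        · intro b _ hb
          have : ¬ (c = (b : ℕ)) := by
            intro h; exact hb (Fin.ext h.symm)
          simp [this]
        · simp
      · rw [shiftMat_pow_eq_zero (le_of_not_gt hcD), mul_zero, Matrix.trace_zero]
        symm
        apply Finset.sum_eq_zero
        intro p _
        have : ¬ (c = (p : ℕ)) := by have := p.isLt; omega
        simp [this]
    change mpsVec A X n ∈ _
    rw [key]
    exact Submodule.sum_mem _ fun p _ =>
      Submodule.smul_mem _ _ (Submodule.subset_span ⟨p, rfl⟩)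
  · rw [Submodule.span_le]
    rintro v ⟨p, rfl⟩
    have hD : 0 < D := p.pos
    apply Submodule.subset_span
    refine ⟨Matrix.of fun i j => if i = p ∧ j = (⟨0, hD⟩ : Fin D) then (1 : ℂ) else 0, ?_⟩
    funext s
    simp only [mpsVec]
    rw [prodA_eq D A hA0 hA1 n s, trace_single_mul, shiftMat_pow_apply,
      dickeState_apply]
    have := p.isLt
    by_cases h : (Finset.univ.filter fun t => s t = 1).card = (p : ℕ)
    · rw [if_pos (by simpa using h), if_pos h]
    · rw [if_neg (fun hh => h (by simpa using hh)), if_neg h]
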